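/- Let x = (x1, x2) with x1 ⟂ x2 discrete, and y = f(x1) with H(y|x1)=0. Suppose z is a deterministic function of x (H(z|x)=0) that is sufficient for y (I(x;y|z)=0) and minimizes H(z) among all such sufficient deterministic representations. Then I(x2; z) = 0. -/

import Mathlib

open scoped BigOperators

/-- A probability mass function on a finite sample space. -/
structure FinPMF (Ω : Type) [Fintype Ω ] where
  p : Ω → ℝ
  nonneg : ∀ ω, 0 ≤ p ω
  sum_one : ∑ ω, p ω = 1

variable {Ω : Type} [Fintype Ω]

/-- Probability of an event. -/
noncomputable def prob (μ : FinPMF Ω) (E : Set Ω) : ℝ :=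
  ∑ ω, E.indicator μ.p ω

/-- Shannon entropy of a finite discrete random variable. -/
noncomputable def entropy {α : Type} [Fintype α] (μ : FinPMF Ω) (X : Ω → α) : ℝ :=
  -∑ a, prob μ {ω | X ω = a} * Real.log (prob μ {ω | X ω = a})

/-- Conditional Shannon entropy `H(X | Y) = H(X,Y) - H(Y)`. -/
noncomputable def condEntropy {α β : Type} [Fintype α] [Fintype β]
    (μ : FinPMF Ω) (X : Ω → α) (Y : Ω → β) : ℝ :=
  entropy μ (fun ω => (X ω, Y ω)) - entropy μ Y

/-- Mutual information `I(X;Y) = H(X) + H(Y) - H(X,Y)`. -/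
noncomputable def mutualInfo {α β : Type} [Fintype α] [Fintype β]
    (μ : FinPMF Ω) (X : Ω → α) (Y : Ω → β) : ℝ :=
  entropy μ X + entropy μ Y - entropy μ (fun ω => (X ω, Y ω))

/-- Conditional mutual information `I(X;Y|Z) = H(X|Z) - H(X|Y,Z)`. -/
noncomputable def condMutualInfo {α β γ : Type} [Fintype α] [Fintype β] [Fintype γ]
    (μ : FinPMF Ω) (X : Ω → α) (Y : Ω → β) (Z : Ω → γ) : ℝ :=
  condEntropy μ X Z - condEntropy μ X (fun ω => (Y ω, Z ω))

section Infra

open Classical in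
/-- The distribution of `W` under `μ`. -/
noncomputable def qd (μ : FinPMF Ω) {α : Type} (W : Ω → α) (a : α) : ℝ :=
  ∑ ω, if W ω = a then μ.p ω else 0

lemma prob_eq_qd (μ : FinPMF Ω) {α : Type} (W : Ω → α) (a : α) :
    prob μ {ω | W ω = a} = qd μ W a := by
  classical
  unfold prob qd
  refine Finset.sum_congr rfl fun ω _ => ?_
  by_cases h : W ω = a <;> simp [Set.indicator_apply, Set.mem_setOf_eq, h]

lemma qd_nonneg (μ : FinPMF Ω) {α : Type} (W : Ω → α) (a : α) : 0 ≤ qd μ W a := by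
  classical
  unfold qd
  refine Finset.sum_nonneg fun ω _ => ?_
  by_cases h : W ω = a <;> simp [h, μ.nonneg ω]

lemma qd_sum_one (μ : FinPMF Ω) {α : Type} [Fintype α] (W : Ω → α) :
    ∑ a, qd μ W a = 1 := by
  classical
  unfold qd
  rw [Finset.sum_comm]
  rw [← μ.sum_one]
  refine Finset.sum_congr rfl fun ω _ => ?_
  simp

lemma qd_congr (μ : FinPMF Ω) {α α' : Type} (W : Ω → α) (W' : Ω → α') (a : α) (a' : α')
    (h : ∀ ω, W ω = a ↔ W' ω = a') : qd μ W a = qd μ W' a' := by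
  classical
  unfold qd
  refine Finset.sum_congr rfl fun ω _ => ?_
  simp only [h ω]

lemma qd_fst (μ : FinPMF Ω) {κ ι : Type} [Fintype κ] (U : Ω → κ) (V : Ω → ι) (i : ι) :
    ∑ k, qd μ (fun ω => (U ω, V ω)) (k, i) = qd μ V i := by
  classical
  unfold qd
  rw [Finset.sum_comm]
  refine Finset.sum_congr rfl fun ω _ => ?_
  simp only [Prod.mk.injEq, ite_and]
  simp

lemma entropy_eq_qd (μ : FinPMF Ω) {α : Type} [Fintype α] (W : Ω → α) :
    entropy μ W = -∑ a, qd μ W a * Real.log (qd μ W a) := by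
  unfold entropy
  simp only [prob_eq_qd]

end Infra
section L1

lemma qd_comp_inj (μ : FinPMF Ω) {α α' : Type} (W : Ω → α) (g : α → α')
    (hg : Function.Injective g) (a : α) :
    qd μ (fun ω => g (W ω)) (g a) = qd μ W a :=
  qd_congr μ _ W (g a) a fun ω => ⟨fun h => hg h, fun h => by rw [h]⟩

lemma qd_eq_zero_of_not_mem (μ : FinPMF Ω) {α : Type} (W : Ω → α) (a : α)
    (h : ∀ ω, W ω ≠ a) : qd μ W a = 0 := by
  classical
  unfold qd
  refine Finset.sum_eq_zero fun ω _ => ?_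
  simp [h ω]

/-- Entropy is invariant under injective post-composition. -/
lemma entropy_comp_inj (μ : FinPMF Ω) {α α' : Type} [Fintype α] [Fintype α']
    (W : Ω → α) (g : α → α') (hg : Function.Injective g) :
    entropy μ (fun ω => g (W ω)) = entropy μ W := by
  classical
  rw [entropy_eq_qd, entropy_eq_qd]
  congr 1
  set F : α' → ℝ := fun b => qd μ (fun ω => g (W ω)) b * Real.log (qd μ (fun ω => g (W ω)) b) with hF
  have h1 : ∑ b ∈ Finset.univ.image g, F b = ∑ a, F (g a) :=
    Finset.sum_image (fun x _ y _ h => hg h)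
  have h2 : ∑ b, F b = ∑ b ∈ Finset.univ.image g, F b := by
    refine (Finset.sum_subset (Finset.subset_univ _) ?_).symm
    intro b _ hb
    have h0 : qd μ (fun ω => g (W ω)) b = 0 := by
      refine qd_eq_zero_of_not_mem μ _ b fun ω hω => hb ?_
      exact Finset.mem_image.mpr ⟨W ω, Finset.mem_univ _, hω⟩
    simp [hF, h0]
  rw [h2, h1]
  refine Finset.sum_congr rfl fun a _ => ?_
  simp only [hF, qd_comp_inj μ W g hg]

/-- Entropy depends only on the random variable up to injective recoding. -/
lemma entropy_congr_inj (μ : FinPMF Ω) {α α' : Type} [Fintype α] [Fintype α']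
    (W : Ω → α) (W' : Ω → α') (g : α → α') (hg : Function.Injective g)
    (h : ∀ ω, W' ω = g (W ω)) : entropy μ W' = entropy μ W := by
  have : W' = fun ω => g (W ω) := funext h
  rw [this, entropy_comp_inj μ W g hg]

end L1
section L2

lemma qd_pair_le_snd (μ : FinPMF Ω) {κ ι : Type} [Fintype κ]
    (U : Ω → κ) (V : Ω → ι) (k : κ) (i : ι) :
    qd μ (fun ω => (U ω, V ω)) (k, i) ≤ qd μ V i := by
  rw [← qd_fst μ U V i]
  exact Finset.single_le_sum (f := fun k' => qd μ (fun ω => (U ω, V ω)) (k', i))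
    (fun k' _ => qd_nonneg μ _ _) (Finset.mem_univ k)

/-- `H(V) ≤ H(U, V)`. -/
lemma entropy_le_pair (μ : FinPMF Ω) {κ ι : Type} [Fintype κ] [Fintype ι]
    (U : Ω → κ) (V : Ω → ι) :
    entropy μ V ≤ entropy μ (fun ω => (U ω, V ω)) := by
  rw [entropy_eq_qd, entropy_eq_qd]
  rw [neg_le_neg_iff]
  calc ∑ t : κ × ι, qd μ (fun ω => (U ω, V ω)) t * Real.log (qd μ (fun ω => (U ω, V ω)) t)
      ≤ ∑ t : κ × ι, qd μ (fun ω => (U ω, V ω)) t * Real.log (qd μ V t.2) := by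
        refine Finset.sum_le_sum fun t _ => ?_
        rcases eq_or_lt_of_le (qd_nonneg μ (fun ω => (U ω, V ω)) t) with h0 | h0
        · rw [← h0]; ring_nf; exact le_refl _
        · refine mul_le_mul_of_nonneg_left ?_ (le_of_lt h0)
          refine Real.log_le_log h0 ?_
          exact qd_pair_le_snd μ U V t.1 t.2
    _ = ∑ i, qd μ V i * Real.log (qd μ V i) := by
        rw [Fintype.sum_prod_type_right]
        refine Finset.sum_congr rfl fun i _ => ?_
        simp only []
        rw [← Finset.sum_mul, qd_fst μ U V i]

end L2
section L3

lemma condMutualInfo_nonneg (μ : FinPMF Ω) {α β γ : Type} [Fintype α] [Fintype β] [Fintype γ]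
    (X : Ω → α) (Y : Ω → β) (Z : Ω → γ) :
    0 ≤ condMutualInfo μ X Y Z := by
  classical
  set P : α × β × γ → ℝ := qd μ (fun ω => (X ω, Y ω, Z ω)) with hP
  set pXZ : α × γ → ℝ := qd μ (fun ω => (X ω, Z ω)) with hpXZ
  set pYZ : β × γ → ℝ := qd μ (fun ω => (Y ω, Z ω)) with hpYZ
  set pZ : γ → ℝ := qd μ Z with hpZ
  -- marginalization facts
  have mA : ∀ b c, ∑ a, P (a, b, c) = pYZ (b, c) := fun b c =>
    qd_fst μ X (fun ω => (Y ω, Z ω)) (b, c)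
  have mB : ∀ a c, ∑ b, P (a, b, c) = pXZ (a, c) := by
    intro a c
    have h : ∀ b, P (a, b, c) = qd μ (fun ω => (Y ω, (X ω, Z ω))) (b, (a, c)) := by
      intro b
      refine qd_congr μ _ _ _ _ fun ω => ?_
      simp only [Prod.mk.injEq]
      tauto
    simp only [h]
    exact qd_fst μ Y (fun ω => (X ω, Z ω)) (a, c)
  have mZa : ∀ c, ∑ a, pXZ (a, c) = pZ c := fun c => qd_fst μ X Z c
  have mZb : ∀ c, ∑ b, pYZ (b, c) = pZ c := fun c => qd_fst μ Y Z c
  -- pointwise bounds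
  have hPle1 : ∀ t : α × β × γ, P t ≤ pXZ (t.1, t.2.2) := by
    rintro ⟨a, b, c⟩
    rw [← mB a c]
    exact Finset.single_le_sum (f := fun b => P (a, b, c))
      (fun _ _ => qd_nonneg μ _ _) (Finset.mem_univ b)
  have hPle2 : ∀ t : α × β × γ, P t ≤ pYZ t.2 := by
    rintro ⟨a, b, c⟩
    rw [← mA b c]
    exact Finset.single_le_sum (f := fun a => P (a, b, c))
      (fun _ _ => qd_nonneg μ _ _) (Finset.mem_univ a)
  have hYZleZ : ∀ b c, pYZ (b, c) ≤ pZ c := fun b c => qd_pair_le_snd μ Y Z b c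
  -- entropy expansions
  have eXYZ : entropy μ (fun ω => (X ω, Y ω, Z ω)) = -∑ t, P t * Real.log (P t) :=
    entropy_eq_qd μ _
  have eXZ : entropy μ (fun ω => (X ω, Z ω)) = -∑ t : α × β × γ, P t * Real.log (pXZ (t.1, t.2.2)) := by
    rw [entropy_eq_qd]
    congr 1
    rw [Fintype.sum_prod_type, Fintype.sum_prod_type, ← hpXZ]
    refine Finset.sum_congr rfl fun a _ => ?_
    rw [Fintype.sum_prod_type, Finset.sum_comm]
    refine Finset.sum_congr rfl fun c _ => ?_
    simp only []
    rw [← Finset.sum_mul, mB a c]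
  have eYZ : entropy μ (fun ω => (Y ω, Z ω)) = -∑ t : α × β × γ, P t * Real.log (pYZ t.2) := by
    rw [entropy_eq_qd, ← hpYZ]
    congr 1
    refine Eq.symm ?_
    rw [Fintype.sum_prod_type, Finset.sum_comm]
    refine Finset.sum_congr rfl fun bc _ => ?_
    rcases bc with ⟨b, c⟩
    show ∑ x : α, P (x, b, c) * Real.log (pYZ (b, c)) = pYZ (b, c) * Real.log (pYZ (b, c))
    rw [← Finset.sum_mul, mA b c]
  have eZ : entropy μ Z = -∑ t : α × β × γ, P t * Real.log (pZ t.2.2) := by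
    rw [entropy_eq_qd, ← hpZ]
    congr 1
    rw [Fintype.sum_prod_type, Finset.sum_comm]
    have h1 : ∀ bc : β × γ, ∑ a, P (a, bc) * Real.log (pZ bc.2) = pYZ bc * Real.log (pZ bc.2) := by
      rintro ⟨b, c⟩
      rw [← Finset.sum_mul, mA b c]
    calc ∑ c, pZ c * Real.log (pZ c)
        = ∑ c, ∑ b, pYZ (b, c) * Real.log (pZ c) := by
          refine Finset.sum_congr rfl fun c _ => ?_
          rw [← Finset.sum_mul, mZb c]
      _ = ∑ bc : β × γ, pYZ bc * Real.log (pZ bc.2) := by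
          rw [Fintype.sum_prod_type, Finset.sum_comm]
      _ = ∑ bc : β × γ, ∑ a, P (a, bc) * Real.log (pZ (a, bc).2.2) := by
          refine Finset.sum_congr rfl fun bc _ => ?_
          rw [h1 bc]
  set Q : α × β × γ → ℝ := fun t => pXZ (t.1, t.2.2) * pYZ t.2 / pZ t.2.2 with hQ
  have hQnn : ∀ t, 0 ≤ Q t := fun t =>
    div_nonneg (mul_nonneg (qd_nonneg μ _ _) (qd_nonneg μ _ _)) (qd_nonneg μ _ _)
  have sumP : ∑ t : α × β × γ, P t = 1 := qd_sum_one μ _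
  have sumQ : ∑ t : α × β × γ, Q t = 1 := by
    have h1 : ∀ c, ∑ a, ∑ b, Q (a, b, c) = pZ c := by
      intro c
      have : ∀ a, ∑ b, Q (a, b, c) = pXZ (a, c) * pZ c / pZ c := by
        intro a
        show ∑ b, pXZ (a, c) * pYZ (b, c) / pZ c = _
        rw [← Finset.sum_div, ← Finset.mul_sum, mZb c]
      simp only [this]
      rw [← Finset.sum_div, ← Finset.sum_mul, mZa c]
      rcases eq_or_lt_of_le (qd_nonneg μ Z c) with h0 | h0
      · rw [hpZ, ← h0]; simp
      · rw [mul_div_assoc, div_self (ne_of_gt h0), mul_one]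
    calc ∑ t : α × β × γ, Q t = ∑ a, ∑ b, ∑ c, Q (a, b, c) := by
          rw [Fintype.sum_prod_type]
          refine Finset.sum_congr rfl fun a _ => ?_
          rw [Fintype.sum_prod_type]
      _ = ∑ a, ∑ c, ∑ b, Q (a, b, c) :=
          Finset.sum_congr rfl fun a _ => Finset.sum_comm
      _ = ∑ c, ∑ a, ∑ b, Q (a, b, c) := Finset.sum_comm
      _ = ∑ c, pZ c := Finset.sum_congr rfl fun c _ => h1 c
      _ = 1 := qd_sum_one μ Z
  have key : condMutualInfo μ X Y Z =
      ∑ t : α × β × γ, P t * (Real.log (P t) + Real.log (pZ t.2.2)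
        - Real.log (pXZ (t.1, t.2.2)) - Real.log (pYZ t.2)) := by
    have expand : ∑ t : α × β × γ, P t * (Real.log (P t) + Real.log (pZ t.2.2)
        - Real.log (pXZ (t.1, t.2.2)) - Real.log (pYZ t.2))
        = (∑ t : α × β × γ, P t * Real.log (P t)) + (∑ t : α × β × γ, P t * Real.log (pZ t.2.2))
          - (∑ t : α × β × γ, P t * Real.log (pXZ (t.1, t.2.2)))
          - (∑ t : α × β × γ, P t * Real.log (pYZ t.2)) := by
      simp only [mul_add, mul_sub, Finset.sum_add_distrib, Finset.sum_sub_distrib]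
    unfold condMutualInfo condEntropy
    rw [expand]
    have eXYZ' : entropy μ (fun ω => (X ω, (Y ω, Z ω))) = -∑ t : α × β × γ, P t * Real.log (P t) := eXYZ
    rw [eXYZ', eXZ, eYZ, eZ]
    ring
  have bound : ∀ t : α × β × γ, P t - Q t ≤ P t * (Real.log (P t) + Real.log (pZ t.2.2)
      - Real.log (pXZ (t.1, t.2.2)) - Real.log (pYZ t.2)) := by
    intro t
    rcases eq_or_lt_of_le (qd_nonneg μ (fun ω => (X ω, Y ω, Z ω)) t) with h0 | h0
    · rw [← hP] at h0
      rw [← h0]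
      simpa using hQnn t
    · rw [← hP] at h0
      have hu : 0 < pXZ (t.1, t.2.2) := lt_of_lt_of_le h0 (hPle1 t)
      have hv : 0 < pYZ t.2 := lt_of_lt_of_le h0 (hPle2 t)
      have hw : 0 < pZ t.2.2 := lt_of_lt_of_le hv (by rcases t with ⟨a, b, c⟩; exact hYZleZ b c)
      have hQpos : 0 < Q t := div_pos (mul_pos hu hv) hw
      have hlog : Real.log (Q t / P t) ≤ Q t / P t - 1 :=
        Real.log_le_sub_one_of_pos (div_pos hQpos h0)
      rw [Real.log_div (ne_of_gt hQpos) (ne_of_gt h0)] at hlog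
      have hlogQ : Real.log (Q t) = Real.log (pXZ (t.1, t.2.2)) + Real.log (pYZ t.2) - Real.log (pZ t.2.2) := by
        rw [hQ]
        rw [Real.log_div (ne_of_gt (mul_pos hu hv)) (ne_of_gt hw),
          Real.log_mul (ne_of_gt hu) (ne_of_gt hv)]
      have h2 : P t * (Real.log (Q t) - Real.log (P t)) ≤ P t * (Q t / P t - 1) :=
        mul_le_mul_of_nonneg_left hlog (le_of_lt h0)
      have h3 : P t * (Q t / P t - 1) = Q t - P t := by
        field_simp
      nlinarith [h2, h3, hlogQ]
  calc (0 : ℝ) = 1 - 1 := by ring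
    _ = ∑ t : α × β × γ, P t - ∑ t : α × β × γ, Q t := by rw [sumP, sumQ]
    _ = ∑ t : α × β × γ, (P t - Q t) := (Finset.sum_sub_distrib _ _).symm
    _ ≤ ∑ t : α × β × γ, P t * (Real.log (P t) + Real.log (pZ t.2.2)
        - Real.log (pXZ (t.1, t.2.2)) - Real.log (pYZ t.2)) :=
        Finset.sum_le_sum fun t _ => bound t
    _ = condMutualInfo μ X Y Z := key.symm

end L3
section L4

lemma entropy_pair_comm (μ : FinPMF Ω) {κ ι : Type} [Fintype κ] [Fintype ι]
    (U : Ω → κ) (V : Ω → ι) :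
    entropy μ (fun ω => (U ω, V ω)) = entropy μ (fun ω => (V ω, U ω)) :=
  entropy_congr_inj μ (fun ω => (V ω, U ω)) (fun ω => (U ω, V ω)) Prod.swap
    Prod.swap_injective (fun ω => rfl)

lemma mutualInfo_nonneg (μ : FinPMF Ω) {κ ι : Type} [Fintype κ] [Fintype ι]
    (U : Ω → κ) (V : Ω → ι) : 0 ≤ mutualInfo μ U V := by
  have h := condMutualInfo_nonneg μ U V (fun _ => ())
  have e1 : entropy μ (fun ω => (U ω, ())) = entropy μ U :=
    entropy_congr_inj μ U _ (fun a => (a, ())) (fun a b h => congrArg Prod.fst h)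
      (fun ω => rfl)
  have e2 : entropy μ (fun ω => (V ω, ())) = entropy μ V :=
    entropy_congr_inj μ V _ (fun a => (a, ())) (fun a b h => congrArg Prod.fst h)
      (fun ω => rfl)
  have e3 : entropy μ (fun ω => (U ω, V ω, ())) = entropy μ (fun ω => (U ω, V ω)) :=
    entropy_congr_inj μ (fun ω => (U ω, V ω)) _ (fun p => (p.1, p.2, ()))
      (fun p q h => by
        rcases p with ⟨a, b⟩; rcases q with ⟨a', b'⟩
        simp only [Prod.mk.injEq] at h
        exact Prod.ext h.1 h.2.1)
      (fun ω => rfl)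
  have e4 : entropy μ (fun _ : Ω => ()) = 0 := by
    rw [entropy_eq_qd]
    have : qd μ (fun _ : Ω => ()) () = 1 := by
      classical
      unfold qd
      simp [μ.sum_one]
    simp [this]
  unfold condMutualInfo condEntropy at h
  unfold mutualInfo
  simp only [] at h ⊢
  linarith [h, e1, e2, e3, e4]

lemma mutualInfo_comm (μ : FinPMF Ω) {κ ι : Type} [Fintype κ] [Fintype ι]
    (U : Ω → κ) (V : Ω → ι) : mutualInfo μ U V = mutualInfo μ V U := by
  unfold mutualInfo
  rw [entropy_pair_comm]
  ring

end L4
/-- Label blindness in the minimal sufficient statistic: if `x = (x1,x2)` with `x1 ⟂ x2`,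
`y = f(x1)`, and `z` is a deterministic sufficient representation of `x` for `y` that
minimizes `H(z)` among all such representations, then `I(x2;z) = 0`. -/
theorem label_blindness_minimal_sufficient {α1 α2 β γ : Type}
    [Fintype α1] [Fintype α2] [Fintype β] [Fintype γ]
    (μ : FinPMF Ω) (X1 : Ω → α1) (X2 : Ω → α2) (f : α1 → β) (Z : Ω → γ)
    (hind : mutualInfo μ X1 X2 = 0)
    (hdet : condEntropy μ Z (fun ω => (X1 ω, X2 ω)) = 0)
    (hsuff : condMutualInfo μ (fun ω => (X1 ω, X2 ω)) (fun ω => f (X1 ω)) Z = 0)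
    (hmin : ∀ (γ' : Type) [Fintype γ'] (Z' : Ω → γ'),
      condEntropy μ Z' (fun ω => (X1 ω, X2 ω)) = 0 →
      condMutualInfo μ (fun ω => (X1 ω, X2 ω)) (fun ω => f (X1 ω)) Z' = 0 →
      entropy μ Z ≤ entropy μ Z') :
    mutualInfo μ X2 Z = 0 := by
  classical
  -- Step A: from sufficiency, H(y,z) = H(z)
  have e1 : entropy μ (fun ω => ((X1 ω, X2 ω), (f (X1 ω), Z ω)))
      = entropy μ (fun ω => ((X1 ω, X2 ω), Z ω)) :=
    entropy_congr_inj μ (fun ω => ((X1 ω, X2 ω), Z ω)) _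
      (fun p => (p.1, (f p.1.1, p.2)))
      (fun p q h => by
        simp only [Prod.mk.injEq] at h
        exact Prod.ext h.1 h.2.2)
      (fun ω => rfl)
  unfold condMutualInfo condEntropy at hsuff
  simp only [] at hsuff
  have hyz : entropy μ (fun ω => (f (X1 ω), Z ω)) = entropy μ Z := by
    linarith [hsuff, e1]
  -- Step B: y itself is a deterministic sufficient representation
  have hy_det : condEntropy μ (fun ω => f (X1 ω)) (fun ω => (X1  ω, X2 ω)) = 0 := by
    unfold condEntropy
    have : entropy μ (fun ω => (f (X1 ω), (X1 ω, X2 ω)))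
        = entropy μ (fun ω => (X1 ω, X2 ω)) :=
      entropy_congr_inj μ (fun ω => (X1 ω, X2 ω)) _ (fun p => (f p.1, p))
        (fun p q h => congrArg Prod.snd h) (fun ω => rfl)
    linarith
  have hy_suff : condMutualInfo μ (fun ω => (X1 ω, X2 ω)) (fun ω => f (X1 ω))
      (fun ω => f (X1 ω)) = 0 := by
    unfold condMutualInfo condEntropy
    have d1 : entropy μ (fun ω => ((X1 ω, X2 ω), (f (X1 ω), f (X1 ω))))
        = entropy μ (fun ω => ((X1 ω, X2 ω), f (X1 ω))) :=
      entropy_congr_inj μ (fun ω => ((X1 ω, X2 ω), f (X1 ω))) _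
        (fun p => (p.1, (p.2, p.2)))
        (fun p q h => by
          simp only [Prod.mk.injEq] at h
          exact Prod.ext h.1 h.2.1)
        (fun ω => rfl)
    have d2 : entropy μ (fun ω => (f (X1 ω), f (X1 ω))) = entropy μ (fun ω => f (X1 ω)) :=
      entropy_congr_inj μ (fun ω => f (X1 ω)) _ (fun b => (b, b))
        (fun p q h => congrArg Prod.fst h) (fun ω => rfl)
    simp only []
    linarith
  have hle : entropy μ Z ≤ entropy μ (fun ω => f (X1 ω)) :=
    hmin β (fun ω => f (X1 ω)) hy_det hy_suff
  -- Step C: H(z) = H(y) and H(y,z) = H(y) = H(z)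
  have hge : entropy μ (fun ω => f (X1 ω)) ≤ entropy μ Z := by
    have h1 : entropy μ (fun ω => f (X1 ω)) ≤ entropy μ (fun ω => (Z ω, f (X1 ω))) :=
      entropy_le_pair μ Z (fun ω => f (X1 ω))
    have h2 : entropy μ (fun ω => (Z ω, f (X1 ω))) = entropy μ (fun ω => (f (X1 ω), Z ω)) :=
      (entropy_pair_comm μ Z (fun ω => f (X1 ω)))
    linarith [hyz]
  have hZy : entropy μ Z = entropy μ (fun ω => f (X1 ω)) := le_antisymm hle hge
  -- Step D: I(X2; y) = 0
  have c1 : condMutualInfo μ X2 (fun ω => f (X1 ω)) X1 = 0 := by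
    unfold condMutualInfo condEntropy
    have d1 : entropy μ (fun ω => (f (X1 ω), X1 ω)) = entropy μ X1 :=
      entropy_congr_inj μ X1 _ (fun a => (f a, a))
        (fun p q h => congrArg Prod.snd h) (fun ω => rfl)
    have d2 : entropy μ (fun ω => (X2 ω, (f (X1 ω), X1 ω)))
        = entropy μ (fun ω => (X2 ω, X1 ω)) :=
      entropy_congr_inj μ (fun ω => (X2 ω, X1 ω)) _ (fun p => (p.1, (f p.2, p.2)))
        (fun p q h => by
          simp only [Prod.mk.injEq] at h
          exact Prod.ext h.1 h.2.2)
        (fun ω => rfl)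
    simp only []
    linarith
  have c2 : 0 ≤ condMutualInfo μ X2 X1 (fun ω => f (X1 ω)) :=
    condMutualInfo_nonneg μ X2 X1 (fun ω => f (X1 ω))
  have c3 : 0 ≤ mutualInfo μ X2 (fun ω => f (X1 ω)) :=
    mutualInfo_nonneg μ X2 (fun ω => f (X1 ω))
  have c4 : mutualInfo μ X2 X1 = 0 := by rw [mutualInfo_comm]; exact hind
  -- chain identity pieces
  have d3 : entropy μ (fun ω => (X2 ω, (X1 ω, f (X1 ω))))
      = entropy μ (fun ω => (X2 ω, (f (X1 ω), X1 ω))) :=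
    entropy_congr_inj μ (fun ω => (X2 ω, (f (X1 ω), X1 ω))) _
      (fun p => (p.1, (p.2.2, p.2.1)))
      (fun p q h => by
        simp only [Prod.mk.injEq] at h
        exact Prod.ext h.1 (Prod.ext h.2.2 h.2.1))
      (fun ω => rfl)
  have d4 : entropy μ (fun ω => (X1 ω, f (X1 ω))) = entropy μ (fun ω => (f (X1 ω), X1 ω)) :=
    entropy_pair_comm μ X1 (fun ω => f (X1 ω))
  have hI2y : mutualInfo μ X2 (fun ω => f (X1 ω)) = 0 := by
    unfold condMutualInfo condEntropy at c1 c2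
    unfold mutualInfo at c3 c4 ⊢
    simp only [] at c1 c2 c3 c4 ⊢
    linarith [c1, c2, c3, c4, d3, d4]
  -- Step E: I(X2; y | Z) = 0, hence H(X2,y,Z) = H(X2,Z)
  have e5 : entropy μ (fun ω => (X2 ω, (f (X1 ω), Z ω)))
      = entropy μ (fun ω => (f (X1 ω), (X2 ω, Z ω))) :=
    entropy_congr_inj μ (fun ω => (f (X1 ω), (X2 ω, Z ω))) _
      (fun p => (p.2.1, (p.1, p.2.2)))
      (fun p q h => by
        simp only [Prod.mk.injEq] at h
        exact Prod.ext h.2.1 (Prod.ext h.1 h.2.2))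
      (fun ω => rfl)
  have e6 : entropy μ (fun ω => (X2 ω, Z ω)) ≤ entropy μ (fun ω => (f (X1 ω), (X2 ω, Z ω))) :=
    entropy_le_pair μ (fun ω => f (X1 ω)) (fun ω => (X2 ω, Z ω))
  have c5 : 0 ≤ condMutualInfo μ X2 (fun ω => f (X1 ω)) Z :=
    condMutualInfo_nonneg μ X2 (fun ω => f (X1 ω)) Z
  have hXYZ : entropy μ (fun ω => (X2 ω, (f (X1 ω), Z ω))) = entropy μ (fun ω => (X2 ω, Z ω)) := by
    unfold condMutualInfo condEntropy at c5
    simp only [] at c5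
    have := hyz
    linarith [c5, e5, e6]
  -- Step F: I(X2; Z | y) = 0, hence H(X2,Z) = H(X2,y)
  have e7 : entropy μ (fun ω => (X2 ω, (Z ω, f (X1 ω))))
      = entropy μ (fun ω => (X2 ω, (f (X1 ω), Z ω))) :=
    entropy_congr_inj μ (fun ω => (X2 ω, (f (X1 ω), Z ω))) _
      (fun p => (p.1, (p.2.2, p.2.1)))
      (fun p q h => by
        simp only [Prod.mk.injEq] at h
        exact Prod.ext h.1 (Prod.ext h.2.2 h.2.1))
      (fun ω => rfl)
  have e8 : entropy μ (fun ω => (Z ω, f (X1 ω))) = entropy μ (fun ω => (f (X1 ω), Z ω)) :=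
    entropy_pair_comm μ Z (fun ω => f (X1 ω))
  have e9 : entropy μ (fun ω => (X2 ω, (Z ω, f (X1 ω))))
      = entropy μ (fun ω => (Z ω, (X2 ω, f (X1 ω)))) :=
    entropy_congr_inj μ (fun ω => (Z ω, (X2 ω, f (X1 ω)))) _
      (fun p => (p.2.1, (p.1, p.2.2)))
      (fun p q h => by
        simp only [Prod.mk.injEq] at h
        exact Prod.ext h.2.1 (Prod.ext h.1 h.2.2))
      (fun ω => rfl)
  have e10 : entropy μ (fun ω => (X2 ω, f (X1 ω)))
      ≤ entropy μ (fun ω => (Z ω, (X2 ω, f (X1 ω)))) :=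
    entropy_le_pair μ Z (fun ω => (X2 ω, f (X1 ω)))
  have c6 : 0 ≤ condMutualInfo μ X2 Z (fun ω => f (X1 ω)) :=
    condMutualInfo_nonneg μ X2 Z (fun ω => f (X1 ω))
  have hX2Z : entropy μ (fun ω => (X2 ω, Z ω)) = entropy μ (fun ω => (X2 ω, f (X1 ω))) := by
    unfold condMutualInfo condEntropy at c6
    simp only [] at c6
    linarith [c6, e7, e8, e9, e10, hXYZ, hyz, hZy]
  -- Conclusion
  unfold mutualInfo at hI2y ⊢
  simp only [] at hI2y ⊢
  linarith [hI2y, hX2Z, hZy]
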